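/- Jucys' theorem for e_k: in the group algebra of S_n, the k-th elementary symmetric polynomial in the Jucys–Murphy elements satisfies e_k(J_1,…,J_n) = Σ_{μ ⊢ n, |μ|−ℓ(μ)=k} C_μ, the sum of all conjugacy class sums C_μ over partitions μ of n with n − ℓ(μ) = k. -/

import Mathlib

open Equiv Equiv.Perm Polynomial Finset

variable {α : Type*} [DecidableEq α] [Fintype α]

private lemma multiset_card_le_sum {s : Multiset ℕ} (h : ∀ a ∈ s, 2 ≤ a) :
    s.card ≤ s.sum ∧ (s = 0 ∨ s.card + 1 ≤ s.sum) := by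
  induction s using Multiset.induction with
  | empty => simp
  | cons a s ih =>
    have ha : 2 ≤ a := h a (Multiset.mem_cons_self a s)
    have ih' := ih (fun b hb => h b (Multiset.mem_cons_of_mem hb))
    simp only [Multiset.card_cons, Multiset.sum_cons]
    constructor
    · omega
    · right; omega

lemma card_le_sum_cycleType (σ : Perm α) : σ.cycleType.card ≤ σ.cycleType.sum :=
  (multiset_card_le_sum (s := σ.cycleType) (fun _ ha => two_le_of_mem_cycleType ha)).1

lemma defect_eq_zero_iff (σ : Perm α) :
    σ.cycleType.sum - σ.cycleType.card = 0 ↔ σ = 1 := by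
  constructor
  · intro h
    by_contra hne
    have h0 : σ.cycleType ≠ 0 := fun hc => hne (cycleType_eq_zero.mp hc)
    rcases (multiset_card_le_sum (s := σ.cycleType) (fun _ ha => two_le_of_mem_cycleType ha)).2 with h1 | h1
    · exact h0 h1
    · omega
  · rintro rfl; simp [Equiv.Perm.cycleType_one]

lemma support_mul_swap {c : Perm α} {j m : α} (hj : j ∈ c.support) (hm : m ∉ c.support) :
    (c * Equiv.swap j m).support = insert m c.support := by
  have hcm : c m = m := Equiv.Perm.notMem_support.mp hm
  have hjm : j ≠ m := fun h => hm (h ▸ hj)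
  ext x
  simp only [Equiv.Perm.mem_support, Equiv.Perm.mul_apply, Finset.mem_insert]
  rcases eq_or_ne x j with rfl | hxj
  · rw [Equiv.swap_apply_left, hcm]
    exact ⟨fun _ => Or.inr (Equiv.Perm.mem_support.mp hj), fun _ => Ne.symm hjm⟩
  · by_cases hxm : x = m
    · rw [hxm, Equiv.swap_apply_right]
      have hcj : c j ≠ m := fun h => hm (h ▸ Equiv.Perm.apply_mem_support.mpr hj)
      exact ⟨fun _ => Or.inl rfl, fun _ => hcj⟩
    · rw [Equiv.swap_apply_of_ne_of_ne hxj hxm]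
      exact ⟨Or.inr, fun h => h.resolve_left hxm⟩

lemma isCycle_mul_swap {c : Perm α} {j m : α} (hc : c.IsCycle)
    (hj : j ∈ c.support) (hm : m ∉ c.support) : (c * Equiv.swap j m).IsCycle := by
  have hcm : c m = m := Equiv.Perm.notMem_support.mp hm
  have hjm : j ≠ m := fun h => hm (h ▸ hj)
  set g := c * Equiv.swap j m with hg
  have hgj : g j = m := by
    rw [hg, Equiv.Perm.mul_apply, Equiv.swap_apply_left, hcm]
  have hgm : g m = c j := by
    rw [hg, Equiv.Perm.mul_apply, Equiv.swap_apply_right]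
  have hgx : ∀ x, x ≠ j → x ≠ m → g x = c x := fun x h1 h2 => by
    rw [hg, Equiv.Perm.mul_apply, Equiv.swap_apply_of_ne_of_ne h1 h2]
  have hSC : ∀ i : ℕ, g.SameCycle j ((c ^ i) j) := by
    intro i
    induction i with
    | zero => simpa using Equiv.Perm.SameCycle.refl g j
    | succ i ih =>
      have hmem : (c ^ i) j ∈ c.support := by
        rw [Equiv.Perm.pow_apply_mem_support]; exact hj
      have step : g.SameCycle ((c ^ i) j) (c ((c ^ i) j)) := by
        rcases eq_or_ne ((c ^ i) j) j with he | hne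
        · rw [he]
          refine ⟨2, ?_⟩
          show (g ^ (2:ℤ)) j = c j
          have : (g ^ (2:ℤ)) j = g (g j) := by
            rw [zpow_two]; rfl
          rw [this, hgj, hgm]
        · have hnm : (c ^ i) j ≠ m := fun h => hm (h ▸ hmem)
          exact ⟨1, by rw [zpow_one]; exact hgx _ hne hnm⟩
      have : (c ^ (i + 1)) j = c ((c ^ i) j) := by
        rw [pow_succ', Equiv.Perm.mul_apply]
      rw [this]
      exact ih.trans step
  refine ⟨j, by rw [hgj]; exact Ne.symm hjm, fun y hy => ?_⟩
  have hy' : y ∈ g.support := Equiv.Perm.mem_support.mpr hy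
  rw [hg, support_mul_swap hj hm, Finset.mem_insert] at hy'
  rcases hy' with rfl | hy'
  · exact ⟨1, by rw [zpow_one]; exact hgj⟩
  · obtain ⟨i, hi⟩ := hc.exists_pow_eq (Equiv.Perm.mem_support.mp hj)
      (Equiv.Perm.mem_support.mp hy')
    rw [← hi]
    exact hSC i

lemma defect_mul_swap {σ : Perm α} {j m : α} (hjm : j ≠ m) (hm : σ m = m) :
    (σ * Equiv.swap j m).cycleType.sum - (σ * Equiv.swap j m).cycleType.card
      = (σ.cycleType.sum - σ.cycleType.card) + 1 := by
  have hms : m ∉ σ.support := Equiv.Perm.notMem_support.mpr hm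
  have hle := card_le_sum_cycleType σ
  by_cases hj : σ j = j
  · -- disjoint case
    have hdisj : Equiv.Perm.Disjoint σ (Equiv.swap j m) := by
      intro x
      rcases eq_or_ne x j with rfl | h1
      · exact Or.inl hj
      rcases eq_or_ne x m with rfl | h2
      · exact Or.inl hm
      · exact Or.inr (Equiv.swap_apply_of_ne_of_ne h1 h2)
    have hct : (σ * Equiv.swap j m).cycleType = σ.cycleType + (Equiv.swap j m).cycleType :=
      hdisj.cycleType_mul
    have hsw : (Equiv.swap j m).cycleType = {2} := by
      rw [(Equiv.Perm.isCycle_swap hjm).cycleType, Equiv.Perm.card_support_swap hjm]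
    rw [hct, hsw]
    simp only [Multiset.sum_add, Multiset.card_add, Multiset.sum_singleton,
      Multiset.card_singleton]
    omega
  · -- j is in a cycle of σ
    set c := σ.cycleOf j with hcdef
    have hc : c.IsCycle := Equiv.Perm.isCycle_cycleOf σ hj
    have hjc : j ∈ c.support :=
      Equiv.Perm.mem_support_cycleOf_iff.mpr ⟨Equiv.Perm.SameCycle.refl _ _,
        Equiv.Perm.mem_support.mpr hj⟩
    have hmc : m ∉ c.support := fun h => hms (Equiv.Perm.support_cycleOf_le σ j h)
    have hcf : c ∈ σ.cycleFactorsFinset :=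
      Equiv.Perm.cycleOf_mem_cycleFactorsFinset_iff.mpr (Equiv.Perm.mem_support.mpr hj)
    have hdisj : Equiv.Perm.Disjoint (σ * c⁻¹) c :=
      Equiv.Perm.disjoint_mul_inv_of_mem_cycleFactorsFinset hcf
    set τ := σ * c⁻¹ with hτdef
    have hστ : σ = τ * c := by rw [hτdef]; group
    have hτm : τ m = m := by
      have hcmget : c m = m := Equiv.Perm.notMem_support.mp hmc
      have : c⁻¹ m = m := by
        conv_lhs => rw [← hcmget]
        exact c.symm_apply_apply m
      rw [hτdef, Equiv.Perm.mul_apply, this, hm]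
    set g := c * Equiv.swap j m with hgdef
    have hgc : g.IsCycle := isCycle_mul_swap hc hjc hmc
    have hgs : g.support = insert m c.support := support_mul_swap hjc hmc
    have hdisj2 : Equiv.Perm.Disjoint τ g := by
      rw [Equiv.Perm.disjoint_iff_disjoint_support] at hdisj ⊢
      rw [hgs]
      rw [Finset.disjoint_insert_right]
      exact ⟨Equiv.Perm.notMem_support.mpr hτm, hdisj⟩
    have hmul : σ * Equiv.swap j m = τ * g := by
      rw [hστ, hgdef, mul_assoc]
    have hctσ : σ.cycleType = τ.cycleType + c.cycleType := by
      conv_lhs => rw [hστ]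
      exact hdisj.cycleType_mul
    have hctg : (σ * Equiv.swap j m).cycleType = τ.cycleType + g.cycleType := by
      rw [hmul]; exact hdisj2.cycleType_mul
    have hcc : c.cycleType = {c.support.card} := hc.cycleType
    have hgg : g.cycleType = {c.support.card + 1} := by
      rw [hgc.cycleType, hgs, Finset.card_insert_of_notMem hmc]
    rw [hctσ, hcc] at hle ⊢
    rw [hctg, hgg]
    simp only [Multiset.sum_add, Multiset.card_add, Multiset.sum_singleton,
      Multiset.card_singleton] at hle ⊢
    omega

/-- The Jucys–Murphy element `J_i = Σ_{j<i} (j i)` in the group algebra `ℂ[S_n]`. -/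
noncomputable def JM (n : ℕ) (i : Fin n) : MonoidAlgebra ℂ (Equiv.Perm (Fin n)) :=
  ∑ j ∈ Finset.univ.filter (fun j : Fin n => j < i),
    MonoidAlgebra.single (Equiv.swap j i) (1 : ℂ)


lemma jucys_key (n : ℕ) (m : ℕ) (hm : m ≤ n) (k : ℕ) :
    ((((List.finRange n).take m).map fun i =>
        (1 : Polynomial (MonoidAlgebra ℂ (Equiv.Perm (Fin n)))) +
          Polynomial.X * Polynomial.C (JM n i)).prod).coeff k
    = ∑ σ ∈ Finset.univ.filter (fun σ : Equiv.Perm (Fin n) =>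
        (∀ x : Fin n, m ≤ (x : ℕ) → σ x = x) ∧
          σ.cycleType.sum - σ.cycleType.card = k),
        MonoidAlgebra.single σ (1 : ℂ) := by
  induction m generalizing k with
  | zero =>
    simp only [List.take_zero, List.map_nil, List.prod_nil, Polynomial.coeff_one]
    have hset : Finset.univ.filter (fun σ : Equiv.Perm (Fin n) =>
        (∀ x : Fin n, 0 ≤ (x : ℕ) → σ x = x) ∧
          σ.cycleType.sum - σ.cycleType.card = k)
        = if k = 0 then {(1 : Equiv.Perm (Fin n))} else ∅ := by
      ext σ
      simp only [Finset.mem_filter, Finset.mem_univ, true_and]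
      constructor
      · rintro ⟨hfix, hd⟩
        have hσ : σ = 1 := Equiv.ext fun x => hfix x (Nat.zero_le _)
        subst hσ
        simp only [Equiv.Perm.cycleType_one, Multiset.sum_zero, Multiset.card_zero,
          Nat.sub_zero] at hd
        simp [← hd]
      · intro hσ
        by_cases hk : k = 0
        · simp only [hk, if_true, Finset.mem_singleton] at hσ
          subst hσ
          refine ⟨fun x _ => rfl, ?_⟩
          simp [Equiv.Perm.cycleType_one, hk]
        · simp [hk] at hσ
    rw [hset]
    by_cases hk : k = 0
    · subst hk
      simp [MonoidAlgebra.one_def]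
    · simp [hk, Ne.symm hk]
  | succ m ih =>
    have hmn : m < n := hm
    have ih' := ih (le_of_lt hmn)
    set m' : Fin n := ⟨m, hmn⟩ with hm'
    have htake : (List.finRange n).take (m + 1) = (List.finRange n).take m ++ [m'] := by
      rw [List.take_succ]
      congr 1
      have hlen : m < (List.finRange n).length := by
        rwa [List.length_finRange]
      rw [List.getElem?_eq_getElem hlen]
      simp [List.getElem_finRange, hm', Fin.ext_iff]
    rw [htake, List.map_append, List.prod_append, List.map_singleton, List.prod_singleton]
    set P := (((List.finRange n).take m).map fun i =>
        (1 : Polynomial (MonoidAlgebra ℂ (Equiv.Perm (Fin n)))) +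
          Polynomial.X * Polynomial.C (JM n i)).prod with hP
    have hexp : P * (1 + Polynomial.X * Polynomial.C (JM n m'))
        = P + (P * Polynomial.C (JM n m')) * Polynomial.X := by
      rw [mul_add, mul_one, Polynomial.X_mul, ← mul_assoc]
    rw [hexp, Polynomial.coeff_add]
    cases k with
    | zero =>
      rw [Polynomial.coeff_mul_X_zero, add_zero, ih' 0]
      apply Finset.sum_congr _ (fun _ _ => rfl)
      ext σ
      simp only [Finset.mem_filter, Finset.mem_univ, true_and]
      constructor
      · rintro ⟨hfix, hd⟩
        have hσ : σ = 1 := (defect_eq_zero_iff σ).mp hd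
        subst hσ
        exact ⟨fun x _ => rfl, hd⟩
      · rintro ⟨hfix, hd⟩
        have hσ : σ = 1 := (defect_eq_zero_iff σ).mp hd
        subst hσ
        exact ⟨fun x _ => rfl, hd⟩
    | succ k =>
      rw [Polynomial.coeff_mul_X, Polynomial.coeff_mul_C, ih' (k + 1), ih' k]
      rw [← Finset.sum_filter_add_sum_filter_not
        (Finset.univ.filter (fun σ : Equiv.Perm (Fin n) =>
          (∀ x : Fin n, m + 1 ≤ (x : ℕ) → σ x = x) ∧
            σ.cycleType.sum - σ.cycleType.card = k + 1))
        (fun σ => σ m' = m')]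
      congr 1
      · -- fixed part
        apply Finset.sum_congr _ (fun _ _ => rfl)
        ext σ
        simp only [Finset.mem_filter, Finset.mem_univ, true_and]
        constructor
        · rintro ⟨hfix, hd⟩
          refine ⟨⟨fun x hx => hfix x (by omega), hd⟩, hfix m' le_rfl⟩
        · rintro ⟨⟨hfix, hd⟩, hfm⟩
          refine ⟨fun x hx => ?_, hd⟩
          rcases Nat.eq_or_lt_of_le hx with he | hlt
          · have : x = m' := Fin.ext he.symm
            rw [this]; exact hfm
          · exact hfix x hlt
      · -- moving part: bijection
        show (∑ σ ∈ _, MonoidAlgebra.single σ (1 : ℂ)) * JM n m' = _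
        rw [JM, Finset.sum_mul_sum]
        simp only [MonoidAlgebra.single_mul_single, one_mul]
        rw [← Finset.sum_product']
        refine Finset.sum_nbij' (fun p => p.1 * Equiv.swap p.2 m')
          (fun τ => (τ * Equiv.swap (τ⁻¹ m') m', τ⁻¹ m')) ?_ ?_ ?_ ?_ ?_
        · rintro ⟨σ, j⟩ hp
          simp only [Finset.mem_product, Finset.mem_filter, Finset.mem_univ, true_and] at hp
          obtain ⟨⟨hfix, hd⟩, hj⟩ := hp
          have hjm' : j ≠ m' := ne_of_lt hj
          have hσm : σ m' = m' := hfix m' le_rfl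
          have hjv : (j : ℕ) < m := hj
          simp only [Finset.mem_filter, Finset.mem_univ, true_and]
          refine ⟨⟨fun x hx => ?_, ?_⟩, ?_⟩
          · have hxj : x ≠ j := by
              intro h; rw [h] at hx; omega
            have hxm : x ≠ m' := by
              intro h; rw [h] at hx; simp only [hm'] at hx; omega
            rw [Equiv.Perm.mul_apply, Equiv.swap_apply_of_ne_of_ne hxj hxm]
            exact hfix x (by omega)
          · rw [defect_mul_swap hjm' hσm, hd]
          · rw [Equiv.Perm.mul_apply, Equiv.swap_apply_right]
            intro h
            exact hjm' (σ.injective (h.trans hσm.symm))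
        · intro τ hτ
          simp only [Finset.mem_filter, Finset.mem_univ, true_and] at hτ
          obtain ⟨⟨hfix, hd⟩, hm'τ⟩ := hτ
          simp only [Finset.mem_product, Finset.mem_filter, Finset.mem_univ, true_and]
          set j := τ⁻¹ m' with hjdef
          have hτj : τ j = m' := τ.apply_symm_apply m'
          have hjm' : j ≠ m' := by
            intro h; rw [h] at hτj; exact hm'τ hτj
          have hjv : (j : ℕ) < m := by
            by_contra hcon
            push_neg at hcon
            rcases Nat.eq_or_lt_of_le hcon with he | hlt
            · exact hjm' (Fin.ext he.symm)
            · have : τ j = j := hfix j hlt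
              rw [hτj] at this
              exact hjm' this.symm
          have hσm : (τ * Equiv.swap j m') m' = m' := by
            rw [Equiv.Perm.mul_apply, Equiv.swap_apply_right, hτj]
          refine ⟨⟨fun x hx => ?_, ?_⟩, ?_⟩
          · rcases Nat.eq_or_lt_of_le hx with he | hlt
            · have : x = m' := Fin.ext he.symm
              rw [this]; exact hσm
            · have hxj : x ≠ j := by
                intro h; rw [h] at hlt; omega
              have hxm : x ≠ m' := by
                intro h; rw [h] at hlt; simp only [hm'] at hlt; omega
              rw [Equiv.Perm.mul_apply, Equiv.swap_apply_of_ne_of_ne hxj hxm]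
              exact hfix x hlt
          · have hback : (τ * Equiv.swap j m') * Equiv.swap j m' = τ := by
              rw [mul_assoc, Equiv.swap_mul_self, mul_one]
            have := defect_mul_swap (σ := τ * Equiv.swap j m') hjm' hσm
            rw [hback, hd] at this
            omega
          · exact hjv
        · rintro ⟨σ, j⟩ hp
          simp only [Finset.mem_product, Finset.mem_filter, Finset.mem_univ, true_and] at hp
          obtain ⟨⟨hfix, hd⟩, hj⟩ := hp
          have hσm : σ m' = m' := hfix m' le_rfl
          have h1 : (σ * Equiv.swap j m') j = m' := by
            rw [Equiv.Perm.mul_apply, Equiv.swap_apply_left, hσm]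
          have h2 : (σ * Equiv.swap j m')⁻¹ m' = j :=
            (Equiv.Perm.inv_eq_iff_eq).mpr h1.symm
          show ((σ * Equiv.swap j m') * Equiv.swap ((σ * Equiv.swap j m')⁻¹ m') m',
              (σ * Equiv.swap j m')⁻¹ m') = (σ, j)
          rw [h2, mul_assoc, Equiv.swap_mul_self, mul_one]
        · intro τ _
          show (τ * Equiv.swap (τ⁻¹ m') m') * Equiv.swap (τ⁻¹ m') m' = τ
          rw [mul_assoc, Equiv.swap_mul_self, mul_one]
        · exact fun p _ => rfl

/-- The `k`-th elementary symmetric polynomial in the (commuting) Jucys–Murphy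
elements, defined via the generating function `∏_{i=1}^n (1 + X·J_i) = Σ_k e_k X^k`. -/
noncomputable def ekJM (n k : ℕ) : MonoidAlgebra ℂ (Equiv.Perm (Fin n)) :=
  Polynomial.coeff
    (((List.finRange n).map fun i =>
        (1 : Polynomial (MonoidAlgebra ℂ (Equiv.Perm (Fin n)))) +
          Polynomial.X * Polynomial.C (JM n i)).prod) k

theorem stmt_19 (n k : ℕ) :
    ekJM n k =
      ∑ σ ∈ Finset.univ.filter
          (fun σ : Equiv.Perm (Fin n) => σ.cycleType.sum - σ.cycleType.card = k),
        MonoidAlgebra.single σ (1 : ℂ) := by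
  have htake : (List.finRange n).take n = List.finRange n := by
    have h := List.take_length (l := List.finRange n)
    rwa [List.length_finRange] at h
  have h := jucys_key n n le_rfl k
  rw [htake] at h
  rw [ekJM, h]
  apply Finset.sum_congr _ (fun _ _ => rfl)
  ext σ
  simp only [Finset.mem_filter, Finset.mem_univ, true_and]
  exact ⟨fun h => h.2, fun h => ⟨fun x hx => absurd x.isLt (not_lt.mpr hx), h⟩⟩
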